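/- Fix x ∈ ℝ. In the ring of formal power series ℝ[[t]], the identity ((1-t)⁴ - x·t·(1+t)²) · Σ_{m=0}^{∞} H_m^{(2)}(x) t^m = (1-t)³ holds, where H_m^{(2)}(x) = ∏_{k=1}^{m}(x + (2cos(2πk/(2m+1)) + 2)²) and H_0^{(2)}(x) = 1. Equivalently, (1-t)³/((1-t)⁴ - xt(1+t)²) = 1 + Σ_{m=1}^{∞} H_m^{(2)}(x) t^m. -/

import Mathlib

open Finset PowerSeries

noncomputable def f (x : ℝ) (m : ℕ) : ℝ :=
  ∏ k ∈ Finset.Icc 1 m, (x + (2 * Real.cos (2 * Real.pi * k / (2 * m + 1)) + 2) ^ 2)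


lemma prod_range_add_pow (n : ℕ) (hn : Odd n) (z : ℂ) :
    ∏ j ∈ Finset.range n, (z + Complex.exp (2 * Real.pi * Complex.I / n) ^ j) = z ^ n + 1 := by
  have hpos : 0 < n := hn.pos
  set ω := Complex.exp (2 * Real.pi * Complex.I / n) with hω
  have hprim : IsPrimitiveRoot ω n := Complex.isPrimitiveRoot_exp n hpos.ne'
  have hinj : ∀ a ∈ Finset.range n, ∀ b ∈ Finset.range n, ω ^ a = ω ^ b → a = b :=
    fun a ha b hb h => hprim.injOn_pow (Finset.mem_coe.2 ha) (Finset.mem_coe.2 hb) h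
  have him : (Finset.range n).image (ω ^ ·) = Polynomial.nthRootsFinset n (1 : ℂ) := by
    apply Finset.eq_of_subset_of_card_le
    · intro ζ hζ
      obtain ⟨j, _, rfl⟩ := Finset.mem_image.1 hζ
      exact (Polynomial.mem_nthRootsFinset hpos (1 : ℂ)).2 (by
        rw [← pow_mul, mul_comm, pow_mul, hprim.pow_eq_one, one_pow])
    · rw [hprim.card_nthRootsFinset, Finset.card_image_of_injOn
        (fun a ha b hb h => hinj a ha b hb h), Finset.card_range]
  have h := Polynomial.X_pow_sub_one_eq_prod hpos hprim
  have h2 := congrArg (Polynomial.eval (-z)) h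
  rw [← him, Finset.prod_image hinj] at h2
  simp only [Polynomial.eval_sub, Polynomial.eval_pow, Polynomial.eval_X, Polynomial.eval_one,
    Polynomial.eval_prod, Polynomial.eval_C] at h2
  rw [hn.neg_pow z] at h2
  have h3 : ∏ j ∈ Finset.range n, (-z - ω ^ j) = (-1) ^ n * ∏ j ∈ Finset.range n, (z + ω ^ j) :=
    calc ∏ j ∈ Finset.range n, (-z - ω ^ j) = ∏ j ∈ Finset.range n, (-1 * (z + ω ^ j)) :=
          Finset.prod_congr rfl fun j _ => by ring
      _ = (∏ _j ∈ Finset.range n, (-1 : ℂ)) * ∏ j ∈ Finset.range n, (z + ω ^ j) :=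
          Finset.prod_mul_distrib
      _ = (-1) ^ n * ∏ j ∈ Finset.range n, (z + ω ^ j) := by
          rw [Finset.prod_const, Finset.card_range]
  rw [h3, hn.neg_one_pow] at h2
  linear_combination h2

lemma key (k : ℕ) (z : ℂ) :
    (z + 1) * ∏ i ∈ Finset.Icc 1 k,
        (z ^ 2 + 2 * Complex.cos (2 * (Real.pi : ℂ) * i / (2 * k + 1)) * z + 1) =
      z ^ (2 * k + 1) + 1 := by
  set n : ℕ := 2 * k + 1 with hn
  have hodd : Odd n := ⟨k, by omega⟩
  set ω : ℂ := Complex.exp (2 * Real.pi * Complex.I / n) with hω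
  have hcast : ((n : ℕ) : ℂ) = 2 * (k : ℂ) + 1 := by rw [hn]; push_cast; ring
  have hωpow : ∀ i : ℕ, ω ^ i =
      Complex.exp ((2 * (Real.pi : ℂ) * i / (2 * k + 1)) * Complex.I) := by
    intro i
    rw [hω, ← Complex.exp_nat_mul]
    congr 1
    rw [← hcast]
    ring
  have hfac : ∀ i ∈ Finset.Icc 1 k,
      z ^ 2 + 2 * Complex.cos (2 * (Real.pi : ℂ) * i / (2 * k + 1)) * z + 1
        = (z + ω ^ i) * (z + ω ^ (n - i)) := by
    intro i hi
    have hik : i ≤ k := (Finset.mem_Icc.1 hi).2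
    set θ : ℂ := 2 * (Real.pi : ℂ) * i / (2 * k + 1) with hθ
    have h1 : ω ^ i = Complex.exp (θ * Complex.I) := hωpow i
    have hprod : ω ^ (n - i) * ω ^ i = 1 := by
      rw [← pow_add, Nat.sub_add_cancel (by omega : i ≤ n), hω, ← Complex.exp_nat_mul,
        show ((n : ℕ) : ℂ) * (2 * Real.pi * Complex.I / n) = 2 * Real.pi * Complex.I by
          have hn0 : ((n : ℕ) : ℂ) ≠ 0 := Nat.cast_ne_zero.2 (by omega)
          field_simp]
      exact Complex.exp_two_pi_mul_I
    have h2 : ω ^ (n - i) = Complex.exp (-(θ * Complex.I)) := by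
      rw [eq_inv_of_mul_eq_one_left hprod, h1, ← Complex.exp_neg]
    have hsum : ω ^ i + ω ^ (n - i) = 2 * Complex.cos θ := by
      rw [h1, h2, show -(θ * Complex.I) = (-θ) * Complex.I by ring,
        Complex.exp_mul_I, Complex.exp_mul_I, Complex.cos_neg, Complex.sin_neg]
      ring
    have hprod1 : ω ^ i * ω ^ (n - i) = 1 := by rw [mul_comm]; exact hprod
    linear_combination (-z) * hsum - hprod1
  rw [Finset.prod_congr rfl hfac, Finset.prod_mul_distrib]
  have hre : ∏ i ∈ Finset.Icc 1 k, (z + ω ^ (n - i))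
      = ∏ j ∈ Finset.Icc (k + 1) (2 * k), (z + ω ^ j) := by
    rw [show Finset.Icc (k + 1) (2 * k) = (Finset.Icc 1 k).image (fun i => n - i) from by
        ext j
        simp only [Finset.mem_image, Finset.mem_Icc]
        constructor
        · intro hj; exact ⟨n - j, by omega, by omega⟩
        · rintro ⟨i, hi, rfl⟩; omega,
      Finset.prod_image (fun a ha b hb hab => by
        simp only [Finset.mem_coe, Finset.mem_Icc] at ha hb; omega)]
  rw [hre]
  have hIoc1 : Finset.Icc 1 k = Finset.Ioc 0 k := by ext j; simp; omega
  have hIoc2 : Finset.Icc (k + 1) (2 * k) = Finset.Ioc k (2 * k) := by ext j; simp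
  rw [hIoc1, hIoc2, Finset.prod_Ioc_consecutive _ (Nat.zero_le k) (by omega)]
  have hrange : ∏ j ∈ Finset.range n, (z + ω ^ j)
      = (z + 1) * ∏ j ∈ Finset.Ioc 0 (2 * k), (z + ω ^ j) := by
    rw [hn, Finset.prod_range_succ',
      show Finset.Ioc 0 (2 * k) = (Finset.range (2 * k)).image (fun i => i + 1) from by
        ext j
        simp only [Finset.mem_image, Finset.mem_range, Finset.mem_Ioc]
        constructor
        · intro hj; exact ⟨j - 1, by omega, by omega⟩
        · rintro ⟨i, hi, rfl⟩; omega,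
      Finset.prod_image (fun a _ b _ hab => by omega)]
    rw [pow_zero]
    ring
  rw [← hrange, prod_range_add_pow n hodd z]

lemma key' (k : ℕ) (z : ℂ) :
    (z + 1) * ∏ i ∈ Finset.Icc 1 k,
        (z ^ 2 + 2 * Complex.cos ((2 * Real.pi * (i : ℝ) / (2 * (k : ℝ) + 1) : ℝ) : ℂ) * z + 1) =
      z ^ (2 * k + 1) + 1 := by
  rw [← key k z]
  refine congrArg _ (Finset.prod_congr rfl fun i _ => ?_)
  have h : ((2 * Real.pi * (i : ℝ) / (2 * (k : ℝ) + 1) : ℝ) : ℂ)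
      = 2 * (Real.pi : ℂ) * i / (2 * k + 1) := by push_cast; ring
  rw [h]

set_option maxHeartbeats 2000000 in
set_option maxRecDepth 100000 in
lemma scalar_ids (x : ℝ) (hx : x ≠ -16) :
    (f x 1 - (4 + x) * f x 0 + 3 = 0) ∧
    (f x 2 - (4 + x) * f x 1 + (6 - 2 * x) * f x 0 - 3 = 0) ∧
    (f x 3 - (4 + x) * f x 2 + (6 - 2 * x) * f x 1 - (4 + x) * f x 0 + 1 = 0) ∧
    (∀ m : ℕ, f x (m + 4) - (4 + x) * f x (m + 3) + (6 - 2 * x) * f x (m + 2)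
      - (4 + x) * f x (m + 1) + f x m = 0) := by
  obtain ⟨s, hs0⟩ := IsAlgClosed.exists_pow_nat_eq (-(x : ℂ)) (n := 2) (by norm_num)
  have hs : s ^ 2 + (x : ℂ) = 0 := by rw [hs0]; ring
  obtain ⟨r1, hr1⟩ := IsAlgClosed.exists_pow_nat_eq ((2 + s) ^ 2 - 4 : ℂ) (n := 2) (by norm_num)
  obtain ⟨r2, hr2⟩ := IsAlgClosed.exists_pow_nat_eq ((2 - s) ^ 2 - 4 : ℂ) (n := 2) (by norm_num)
  set z1 : ℂ := (2 + s + r1) / 2 with hz1def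
  set z2 : ℂ := (2 - s + r2) / 2 with hz2def
  have hz1 : z1 ^ 2 - (2 + s) * z1 + 1 = 0 := by rw [hz1def]; linear_combination hr1 / 4
  have hz2 : z2 ^ 2 - (2 - s) * z2 + 1 = 0 := by rw [hz2def]; linear_combination hr2 / 4
  clear_value z1 z2
  have hz10 : z1 ≠ 0 := by intro h; rw [h] at hz1; norm_num at hz1
  have hz20 : z2 ≠ 0 := by intro h; rw [h] at hz2; norm_num at hz2
  have hxc : (x : ℂ) ≠ -16 := by
    intro h; exact hx (by exact_mod_cast h)
  have hz1n : z1 + 1 ≠ 0 := by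
    intro h
    have hm : z1 = -1 := by linear_combination h
    rw [hm] at hz1
    have hsval : s = -4 := by linear_combination hz1
    rw [hsval] at hs
    exact hxc (by linear_combination hs)
  have hz2n : z2 + 1 ≠ 0 := by
    intro h
    have hm : z2 = -1 := by linear_combination h
    rw [hm] at hz2
    have hsval : s = 4 := by linear_combination -hz2
    rw [hsval] at hs
    exact hxc (by linear_combination hs)
  have hA : ∀ c : ℂ, ((x : ℂ) + (2 * c + 2) ^ 2) * (z1 * z2)
      = (z1 ^ 2 + 2 * c * z1 + 1) * (z2 ^ 2 + 2 * c * z2 + 1) := by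
    intro c
    linear_combination ((-1:ℂ) + (-2:ℂ)*z2*c + (-1:ℂ)*z2^2) * hz1 + ((-2:ℂ)*z1 + (-2:ℂ)*z1*c + (-1:ℂ)*z1*s) * hz2 + ((1:ℂ)*z1*z2) * hs
  have hT : ∀ k : ℕ, ((f x k : ℝ) : ℂ) * ((z1 + 1) * (z2 + 1)) * (z1 * z2) ^ k
      = z1 ^ (2 * k + 1) * z2 ^ (2 * k + 1) + z1 ^ (2 * k + 1) + z2 ^ (2 * k + 1) + 1 := by
    intro k
    have hcast : ((f x k : ℝ) : ℂ) = ∏ i ∈ Finset.Icc 1 k,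
        ((x : ℂ) + (2 * Complex.cos ((2 * Real.pi * (i : ℝ) / (2 * (k : ℝ) + 1) : ℝ) : ℂ) + 2) ^ 2) := by
      simp only [f, Complex.ofReal_prod, Complex.ofReal_add, Complex.ofReal_pow,
        Complex.ofReal_mul, Complex.ofReal_ofNat, Complex.ofReal_cos]
    have hc : (Finset.Icc 1 k).card = k := by rw [Nat.card_Icc]; omega
    have e2' : ∏ i ∈ Finset.Icc 1 k,
        (((x : ℂ) + (2 * Complex.cos ((2 * Real.pi * (i : ℝ) / (2 * (k : ℝ) + 1) : ℝ) : ℂ) + 2) ^ 2)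
          * (z1 * z2))
        = (∏ i ∈ Finset.Icc 1 k,
            ((x : ℂ) + (2 * Complex.cos ((2 * Real.pi * (i : ℝ) / (2 * (k : ℝ) + 1) : ℝ) : ℂ) + 2) ^ 2))
          * ∏ _i ∈ Finset.Icc 1 k, (z1 * z2) := Finset.prod_mul_distrib
    have e3' : ∏ _i ∈ Finset.Icc 1 k, (z1 * z2) = (z1 * z2) ^ k := by
      rw [Finset.prod_const, hc]
    have e4' : ∏ i ∈ Finset.Icc 1 k,
        (((x : ℂ) + (2 * Complex.cos ((2 * Real.pi * (i : ℝ) / (2 * (k : ℝ) + 1) : ℝ) : ℂ) + 2) ^ 2)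
          * (z1 * z2))
        = ∏ i ∈ Finset.Icc 1 k,
          ((z1 ^ 2 + 2 * Complex.cos ((2 * Real.pi * (i : ℝ) / (2 * (k : ℝ) + 1) : ℝ) : ℂ) * z1 + 1)
            * (z2 ^ 2 + 2 * Complex.cos ((2 * Real.pi * (i : ℝ) / (2 * (k : ℝ) + 1) : ℝ) : ℂ) * z2 + 1)) :=
      Finset.prod_congr rfl fun i _ => hA _
    have e1' : ∏ i ∈ Finset.Icc 1 k,
        ((z1 ^ 2 + 2 * Complex.cos ((2 * Real.pi * (i : ℝ) / (2 * (k : ℝ) + 1) : ℝ) : ℂ) * z1 + 1)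
          * (z2 ^ 2 + 2 * Complex.cos ((2 * Real.pi * (i : ℝ) / (2 * (k : ℝ) + 1) : ℝ) : ℂ) * z2 + 1))
        = (∏ i ∈ Finset.Icc 1 k,
            (z1 ^ 2 + 2 * Complex.cos ((2 * Real.pi * (i : ℝ) / (2 * (k : ℝ) + 1) : ℝ) : ℂ) * z1 + 1))
          * ∏ i ∈ Finset.Icc 1 k,
            (z2 ^ 2 + 2 * Complex.cos ((2 * Real.pi * (i : ℝ) / (2 * (k : ℝ) + 1) : ℝ) : ℂ) * z2 + 1) :=
      Finset.prod_mul_distrib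
    have hk1 := key' k z1
    have hk2 := key' k z2
    calc ((f x k : ℝ) : ℂ) * ((z1 + 1) * (z2 + 1)) * (z1 * z2) ^ k
        = ((∏ i ∈ Finset.Icc 1 k,
            ((x : ℂ) + (2 * Complex.cos ((2 * Real.pi * (i : ℝ) / (2 * (k : ℝ) + 1) : ℝ) : ℂ) + 2) ^ 2))
            * (z1 * z2) ^ k) * ((z1 + 1) * (z2 + 1)) := by rw [hcast]; ring
      _ = (∏ i ∈ Finset.Icc 1 k,
            (((x : ℂ) + (2 * Complex.cos ((2 * Real.pi * (i : ℝ) / (2 * (k : ℝ) + 1) : ℝ) : ℂ) + 2) ^ 2)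
              * (z1 * z2))) * ((z1 + 1) * (z2 + 1)) := by rw [e2', e3']
      _ = ((z1 + 1) * ∏ i ∈ Finset.Icc 1 k,
            (z1 ^ 2 + 2 * Complex.cos ((2 * Real.pi * (i : ℝ) / (2 * (k : ℝ) + 1) : ℝ) : ℂ) * z1 + 1))
          * ((z2 + 1) * ∏ i ∈ Finset.Icc 1 k,
            (z2 ^ 2 + 2 * Complex.cos ((2 * Real.pi * (i : ℝ) / (2 * (k : ℝ) + 1) : ℝ) : ℂ) * z2 + 1)) := by
          rw [e4', e1']; ring
      _ = (z1 ^ (2 * k + 1) + 1) * (z2 ^ (2 * k + 1) + 1) := by rw [hk1, hk2]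
      _ = z1 ^ (2 * k + 1) * z2 ^ (2 * k + 1) + z1 ^ (2 * k + 1) + z2 ^ (2 * k + 1) + 1 := by
          ring
  have hB1 : (z1 * z2) ^ 4 - (4 + (x : ℂ)) * (z1 * z2) ^ 3 + (6 - 2 * (x : ℂ)) * (z1 * z2) ^ 2
      - (4 + (x : ℂ)) * (z1 * z2) + 1 = 0 := by
    linear_combination ((6:ℂ)*z2^2 + (-2:ℂ)*z2^2*(x:ℂ) + (-8:ℂ)*z2^3 + (-2:ℂ)*z2^3*(x:ℂ) + (-4:ℂ)*z2^3*s + (-1:ℂ)*z2^3*s*(x:ℂ) + (3:ℂ)*z2^4 + (4:ℂ)*z2^4*s + (1:ℂ)*z2^4*s^2 + (-4:ℂ)*z1*z2^3 + (-1:ℂ)*z1*z2^3*(x:ℂ) + (2:ℂ)*z1*z2^4 + (1:ℂ)*z1*z2^4*s + (1:ℂ)*z1^2*z2^4) * hz1 + ((1:ℂ) + (6:ℂ)*(x:ℂ) + (6:ℂ)*s^2 + (-1:ℂ)*s^2*(x:ℂ) + (-1:ℂ)*s^4 + (2:ℂ)*z2 + (2:ℂ)*z2*(x:ℂ) + (-1:ℂ)*z2*s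 + (1:ℂ)*z2*s*(x:ℂ) + (2:ℂ)*z2*s^2 + (1:ℂ)*z2*s^3 + (-3:ℂ)*z2^2 + (-4:ℂ)*z2^2*s + (-1:ℂ)*z2^2*s^2 + (-10:ℂ)*z1*(x:ℂ) + (-7:ℂ)*z1*s*(x:ℂ) + (-10:ℂ)*z1*s^2 + (2:ℂ)*z1*s^2*(x:ℂ) + (-7:ℂ)*z1*s^3 + (1:ℂ)*z1*s^3*(x:ℂ) + (2:ℂ)*z1*s^4 + (1:ℂ)*z1*s^5 + (-4:ℂ)*z1*z2 + (-3:ℂ)*z1*z2*(x:ℂ) + (-4:ℂ)*z1*z2*s*(x:ℂ) + (-2:ℂ)*z1*z2*s^2 + (-1:ℂ)*z1*z2*s^2*(x:ℂ) + (-4:ℂ)*z1*z2*s^3 + (-1:ℂ)*z1*z2*s^4 + (4:ℂ)*z1*z2^2 + (10:ℂ)*z1*z2^2*s + (6:ℂ)*z1*z2^2*s^2 + (1:ℂ)*z1*z2^2*s^3) * hz2 + ((-6:ℂ) + (1:ℂ)*s^2 + (10:ℂ)*z2 + (-7:ℂ)*z2*s + (-2:ℂ)*z2*s^2 + (1:ℂ)*z2*s^3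 + (10:ℂ)*z1 + (7:ℂ)*z1*s + (-2:ℂ)*z1*s^2 + (-1:ℂ)*z1*s^3 + (-18:ℂ)*z1*z2 + (12:ℂ)*z1*z2*s^2 + (-1:ℂ)*z1*z2*s^4) * hs
  have hB2 : z1 ^ 4 - (4 + (x : ℂ)) * z1 ^ 3 * z2 + (6 - 2 * (x : ℂ)) * z1 ^ 2 * z2 ^ 2
      - (4 + (x : ℂ)) * z1 * z2 ^ 3 + z2 ^ 4 = 0 := by
    linear_combination ((3:ℂ) + (4:ℂ)*s + (1:ℂ)*s^2 + (-8:ℂ)*z2 + (-2:ℂ)*z2*(x:ℂ) + (-4:ℂ)*z2*s + (-1:ℂ)*z2*s*(x:ℂ) + (6:ℂ)*z2^2 + (-2:ℂ)*z2^2*(x:ℂ) + (2:ℂ)*z1 + (1:ℂ)*z1*s + (-4:ℂ)*z1*z2 + (-1:ℂ)*z1*z2*(x:ℂ) + (1:ℂ)*z1^2) * hz1 + ((-3:ℂ) + (2:ℂ)*(x:ℂ) + (-4:ℂ)*s + (1:ℂ)*s^2 + (2:ℂ)*z2 + (-1:ℂ)*z2*s + (1:ℂ)*z2^2 + (4:ℂ)*z1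 + (-6:ℂ)*z1*(x:ℂ) + (10:ℂ)*z1*s + (-1:ℂ)*z1*s*(x:ℂ) + (-4:ℂ)*z1*z2 + (-1:ℂ)*z1*z2*(x:ℂ)) * hz2 + ((-2:ℂ) + (6:ℂ)*z2 + (-1:ℂ)*z2*s + (6:ℂ)*z1 + (1:ℂ)*z1*s + (-14:ℂ)*z1*z2) * hs
  have hPw : ∀ j : ℕ, ((z1 + 1) * (z2 + 1)) * (z1 * z2) ^ j ≠ 0 := fun j =>
    mul_ne_zero (mul_ne_zero hz1n hz2n) (pow_ne_zero _ (mul_ne_zero hz10 hz20))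
  refine ⟨?_, ?_, ?_, ?_⟩
  · have hC : (((f x 1 : ℝ) : ℂ) - (4 + (x : ℂ)) * ((f x 0 : ℝ) : ℂ) + 3)
        * (((z1 + 1) * (z2 + 1)) * (z1 * z2) ^ 1) = 0 := by
      linear_combination hT 1 - (4 + (x : ℂ)) * (z1 * z2) * hT 0 + ((2:ℂ) + (1:ℂ)*s + (-1:ℂ)*z2 + (-1:ℂ)*z2*(x:ℂ) + (-1:ℂ)*z2^2 + (-1:ℂ)*z2^2*(x:ℂ) + (2:ℂ)*z2^3 + (1:ℂ)*z2^3*s + (1:ℂ)*z1 + (1:ℂ)*z1*z2^3) * hz1 + ((-1:ℂ) + (1:ℂ)*(x:ℂ) + (-1:ℂ)*s + (1:ℂ)*s^2 + (-1:ℂ)*z2 + (-1:ℂ)*z2*s + (3:ℂ)*z1 + (-3:ℂ)*z1*(x:ℂ) + (4:ℂ)*z1*s + (-1:ℂ)*z1*s*(x:ℂ) + (-2:ℂ)*z1*s^2 + (-1:ℂ)*z1*s^3 + (3:ℂ)*z1*z2 + (4:ℂ)*z1*z2*s + (1:ℂ)*z1*z2*s^2) * hz2 + ((-1:ℂ) +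 (3:ℂ)*z2 + (-1:ℂ)*z2*s + (3:ℂ)*z1 + (1:ℂ)*z1*s + (-9:ℂ)*z1*z2 + (1:ℂ)*z1*z2*s^2) * hs
    have h0 := (mul_eq_zero.1 hC).resolve_right (hPw 1)
    exact_mod_cast h0
  · have hC : (((f x 2 : ℝ) : ℂ) - (4 + (x : ℂ)) * ((f x 1 : ℝ) : ℂ)
        + (6 - 2 * (x : ℂ)) * ((f x 0 : ℝ) : ℂ) - 3)
        * (((z1 + 1) * (z2 + 1)) * (z1 * z2) ^ 3) = 0 := by
      linear_combination (z1 * z2) * hT 2 - (4 + (x : ℂ)) * (z1 * z2) ^ 2 * hT 1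
        + (6 - 2 * (x : ℂ)) * (z1 * z2) ^ 3 * hT 0
        + ((z1 * z2) ^ 2 + z1 * z2) * hB1 + (z1 ^ 2 * z2 + z1 * z2 ^ 2) * hB2
        + ((-5:ℂ)*z2^2 + (-10:ℂ)*z2^2*s + (-6:ℂ)*z2^2*s^2 + (-1:ℂ)*z2^2*s^3 + (5:ℂ)*z2^3 + (5:ℂ)*z2^3*(x:ℂ) + (5:ℂ)*z2^3*s + (5:ℂ)*z2^3*s*(x:ℂ) + (1:ℂ)*z2^3*s^2 + (1:ℂ)*z2^3*s^2*(x:ℂ) + (5:ℂ)*z2^4 + (5:ℂ)*z2^4*(x:ℂ) + (5:ℂ)*z2^4*s + (5:ℂ)*z2^4*s*(x:ℂ) + (1:ℂ)*z2^4*s^2 + (1:ℂ)*z2^4*s^2*(x:ℂ) + (-5:ℂ)*z2^5 + (-10:ℂ)*z2^5*s + (-6:ℂ)*z2^5*s^2 + (-1:ℂ)*z2^5*s^3 + (-3:ℂ)*z1*z2^2 + (-4:ℂ)*z1*z2^2*s + (-1:ℂ)*z1*z2^2*s^2 + (3:ℂ)*z1*z2^3 + (3:ℂ)*z1*z2^3*(x:ℂ)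 + (1:ℂ)*z1*z2^3*s + (1:ℂ)*z1*z2^3*s*(x:ℂ) + (3:ℂ)*z1*z2^4 + (3:ℂ)*z1*z2^4*(x:ℂ) + (1:ℂ)*z1*z2^4*s + (1:ℂ)*z1*z2^4*s*(x:ℂ) + (-3:ℂ)*z1*z2^5 + (-4:ℂ)*z1*z2^5*s + (-1:ℂ)*z1*z2^5*s^2 + (-2:ℂ)*z1^2*z2^2 + (-1:ℂ)*z1^2*z2^2*s + (1:ℂ)*z1^2*z2^3 + (1:ℂ)*z1^2*z2^3*(x:ℂ) + (1:ℂ)*z1^2*z2^4 + (1:ℂ)*z1^2*z2^4*(x:ℂ) + (-2:ℂ)*z1^2*z2^5 + (-1:ℂ)*z1^2*z2^5*s + (-1:ℂ)*z1^3*z2^2 + (-1:ℂ)*z1^3*z2^5) * hz1 + ((-25:ℂ)*(x:ℂ) + (-25:ℂ)*s^2 + (15:ℂ)*s^2*(x:ℂ) + (15:ℂ)*s^4 + (-1:ℂ)*s^4*(x:ℂ) + (-1:ℂ)*s^6 + (-15:ℂ)*z2*(x:ℂ) + (-10:ℂ)*z2*s*(x:ℂ) + (-15:ℂ)*z2*s^2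 + (2:ℂ)*z2*s^2*(x:ℂ) + (-10:ℂ)*z2*s^3 + (1:ℂ)*z2*s^3*(x:ℂ) + (2:ℂ)*z2*s^4 + (1:ℂ)*z2*s^5 + (5:ℂ)*z2^2 + (-5:ℂ)*z2^2*(x:ℂ) + (10:ℂ)*z2^2*s + (-5:ℂ)*z2^2*s*(x:ℂ) + (1:ℂ)*z2^2*s^2 + (-1:ℂ)*z2^2*s^2*(x:ℂ) + (-4:ℂ)*z2^2*s^3 + (-1:ℂ)*z2^2*s^4 + (5:ℂ)*z2^3 + (10:ℂ)*z2^3*s + (6:ℂ)*z2^3*s^2 + (1:ℂ)*z2^3*s^3 + (35:ℂ)*z1*(x:ℂ) + (35:ℂ)*z1*s*(x:ℂ) + (35:ℂ)*z1*s^2 + (-28:ℂ)*z1*s^2*(x:ℂ) + (35:ℂ)*z1*s^3 + (-16:ℂ)*z1*s^3*(x:ℂ) + (-28:ℂ)*z1*s^4 + (2:ℂ)*z1*s^4*(x:ℂ) + (-16:ℂ)*z1*s^5 + (1:ℂ)*z1*s^5*(x:ℂ) + (2:ℂ)*z1*s^6 + (1:ℂ)*z1*s^7 + (21:ℂ)*z1*z2*(x:ℂ)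 + (35:ℂ)*z1*z2*s*(x:ℂ) + (21:ℂ)*z1*z2*s^2 + (7:ℂ)*z1*z2*s^2*(x:ℂ) + (35:ℂ)*z1*z2*s^3 + (-4:ℂ)*z1*z2*s^3*(x:ℂ) + (7:ℂ)*z1*z2*s^4 + (-1:ℂ)*z1*z2*s^4*(x:ℂ) + (-4:ℂ)*z1*z2*s^5 + (-1:ℂ)*z1*z2*s^6 + (-7:ℂ)*z1*z2^2 + (7:ℂ)*z1*z2^2*(x:ℂ) + (-21:ℂ)*z1*z2^2*s + (14:ℂ)*z1*z2^2*s*(x:ℂ) + (-14:ℂ)*z1*z2^2*s^2 + (7:ℂ)*z1*z2^2*s^2*(x:ℂ) + (6:ℂ)*z1*z2^2*s^3 + (1:ℂ)*z1*z2^2*s^3*(x:ℂ) + (6:ℂ)*z1*z2^2*s^4 + (1:ℂ)*z1*z2^2*s^5 + (-7:ℂ)*z1*z2^3 + (-21:ℂ)*z1*z2^3*s + (-21:ℂ)*z1*z2^3*s^2 + (-8:ℂ)*z1*z2^3*s^3 + (-1:ℂ)*z1*z2^3*s^4) * hz2 + ((25:ℂ) + (-15:ℂ)*s^2 + (1:ℂ)*s^4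 + (-35:ℂ)*z2 + (35:ℂ)*z2*s + (28:ℂ)*z2*s^2 + (-16:ℂ)*z2*s^3 + (-2:ℂ)*z2*s^4 + (1:ℂ)*z2*s^5 + (-35:ℂ)*z1 + (-35:ℂ)*z1*s + (28:ℂ)*z1*s^2 + (16:ℂ)*z1*s^3 + (-2:ℂ)*z1*s^4 + (-1:ℂ)*z1*s^5 + (49:ℂ)*z1*z2 + (-98:ℂ)*z1*z2*s^2 + (21:ℂ)*z1*z2*s^4 + (-1:ℂ)*z1*z2*s^6) * hs
    have h0 := (mul_eq_zero.1 hC).resolve_right (hPw 3)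
    exact_mod_cast h0
  · have hC : (((f x 3 : ℝ) : ℂ) - (4 + (x : ℂ)) * ((f x 2 : ℝ) : ℂ)
        + (6 - 2 * (x : ℂ)) * ((f x 1 : ℝ) : ℂ) - (4 + (x : ℂ)) * ((f x 0 : ℝ) : ℂ) + 1)
        * (((z1 + 1) * (z2 + 1)) * (z1 * z2) ^ 3) = 0 := by
      linear_combination hT 3 - (4 + (x : ℂ)) * (z1 * z2) * hT 2
        + (6 - 2 * (x : ℂ)) * (z1 * z2) ^ 2 * hT 1 - (4 + (x : ℂ)) * (z1 * z2) ^ 3 * hT 0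
        + ((z1 * z2) ^ 3 + 1) * hB1 + (z1 ^ 3 + z2 ^ 3) * hB2
    have h0 := (mul_eq_zero.1 hC).resolve_right (hPw 3)
    exact_mod_cast h0
  · intro m
    have hC : (((f x (m + 4) : ℝ) : ℂ) - (4 + (x : ℂ)) * ((f x (m + 3) : ℝ) : ℂ)
        + (6 - 2 * (x : ℂ)) * ((f x (m + 2) : ℝ) : ℂ)
        - (4 + (x : ℂ)) * ((f x (m + 1) : ℝ) : ℂ) + ((f x m : ℝ) : ℂ))
        * (((z1 + 1) * (z2 + 1)) * (z1 * z2) ^ (m + 4)) = 0 := by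
      linear_combination hT (m + 4) - (4 + (x : ℂ)) * (z1 * z2) * hT (m + 3)
        + (6 - 2 * (x : ℂ)) * (z1 * z2) ^ 2 * hT (m + 2)
        - (4 + (x : ℂ)) * (z1 * z2) ^ 3 * hT (m + 1) + (z1 * z2) ^ 4 * hT m
        + ((z1 * z2) ^ (2 * m + 5) + 1) * hB1 + (z1 ^ (2 * m + 5) + z2 ^ (2 * m + 5)) * hB2
    have h0 := (mul_eq_zero.1 hC).resolve_right (hPw (m + 4))
    exact_mod_cast h0

noncomputable def F (m : ℕ) : Polynomial ℝ :=
  ∏ k ∈ Finset.Icc 1 m,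
    (Polynomial.X + Polynomial.C ((2 * Real.cos (2 * Real.pi * k / (2 * m + 1)) + 2) ^ 2))

lemma f_eval (x : ℝ) (m : ℕ) : f x m = (F m).eval x := by
  simp [f, F, Polynomial.eval_prod]

lemma eval_zero_of (p : Polynomial ℝ) (h : ∀ y : ℝ, y ≠ -16 → p.eval y = 0) (x : ℝ) :
    p.eval x = 0 := by
  have h1 : ({(-16 : ℝ)}ᶜ : Set ℝ).Infinite := (Set.finite_singleton _).infinite_compl
  have h2 : p = 0 := p.eq_zero_of_infinite_isRoot
    (h1.mono fun y hy => show Polynomial.IsRoot p y from h y (by simpa using hy))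
  simp [h2]

lemma f_zero (x : ℝ) : f x 0 = 1 := by
  have : Finset.Icc 1 0 = (∅ : Finset ℕ) := by simp
  simp [f, this]

lemma id1_all (x : ℝ) : f x 1 - (4 + x) * f x 0 + 3 = 0 := by
  have h := eval_zero_of (F 1 - (Polynomial.C 4 + Polynomial.X) * F 0 + Polynomial.C 3)
    (fun y hy => by
      have h1 := (scalar_ids y hy).1
      simp only [Polynomial.eval_add, Polynomial.eval_sub, Polynomial.eval_mul,
        Polynomial.eval_C, Polynomial.eval_X, ← f_eval]
      linarith) x
  simp only [Polynomial.eval_add, Polynomial.eval_sub, Polynomial.eval_mul,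
    Polynomial.eval_C, Polynomial.eval_X, ← f_eval] at h
  linarith

lemma id2_all (x : ℝ) : f x 2 - (4 + x) * f x 1 + (6 - 2 * x) * f x 0 - 3 = 0 := by
  have h := eval_zero_of (F 2 - (Polynomial.C 4 + Polynomial.X) * F 1
      + (Polynomial.C 6 - Polynomial.C 2 * Polynomial.X) * F 0 - Polynomial.C 3)
    (fun y hy => by
      have h1 := (scalar_ids y hy).2.1
      simp only [Polynomial.eval_add, Polynomial.eval_sub, Polynomial.eval_mul,
        Polynomial.eval_C, Polynomial.eval_X, ← f_eval]
      linarith) x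
  simp only [Polynomial.eval_add, Polynomial.eval_sub, Polynomial.eval_mul,
    Polynomial.eval_C, Polynomial.eval_X, ← f_eval] at h
  linarith

lemma id3_all (x : ℝ) :
    f x 3 - (4 + x) * f x 2 + (6 - 2 * x) * f x 1 - (4 + x) * f x 0 + 1 = 0 := by
  have h := eval_zero_of (F 3 - (Polynomial.C 4 + Polynomial.X) * F 2
      + (Polynomial.C 6 - Polynomial.C 2 * Polynomial.X) * F 1
      - (Polynomial.C 4 + Polynomial.X) * F 0 + Polynomial.C 1)
    (fun y hy => by
      have h1 := (scalar_ids y hy).2.2.1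
      simp only [Polynomial.eval_add, Polynomial.eval_sub, Polynomial.eval_mul,
        Polynomial.eval_C, Polynomial.eval_X, ← f_eval]
      linarith) x
  simp only [Polynomial.eval_add, Polynomial.eval_sub, Polynomial.eval_mul,
    Polynomial.eval_C, Polynomial.eval_X, ← f_eval] at h
  linarith

lemma rec_all (x : ℝ) (m : ℕ) :
    f x (m + 4) - (4 + x) * f x (m + 3) + (6 - 2 * x) * f x (m + 2)
      - (4 + x) * f x (m + 1) + f x m = 0 := by
  have h := eval_zero_of (F (m + 4) - (Polynomial.C 4 + Polynomial.X) * F (m + 3)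
      + (Polynomial.C 6 - Polynomial.C 2 * Polynomial.X) * F (m + 2)
      - (Polynomial.C 4 + Polynomial.X) * F (m + 1) + F m)
    (fun y hy => by
      have h1 := (scalar_ids y hy).2.2.2 m
      simp only [Polynomial.eval_add, Polynomial.eval_sub, Polynomial.eval_mul,
        Polynomial.eval_C, Polynomial.eval_X, ← f_eval]
      linarith) x
  simp only [Polynomial.eval_add, Polynomial.eval_sub, Polynomial.eval_mul,
    Polynomial.eval_C, Polynomial.eval_X, ← f_eval] at h
  linarith

/-- Generating function for `H_m^{(2)}`: in `ℝ[[t]]`,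
`((1-t)^4 - x t (1+t)^2) · Σ_m H_m^{(2)}(x) t^m = (1-t)^3`. -/
theorem genfun_H2 (x : ℝ) :
    ((1 - PowerSeries.X) ^ 4 -
        PowerSeries.C x * PowerSeries.X * (1 + PowerSeries.X) ^ 2) *
      PowerSeries.mk (fun m =>
        ∏ k ∈ Finset.Icc 1 m, (x + (2 * Real.cos (2 * Real.pi * k / (2 * m + 1)) + 2) ^ 2)) =
    (1 - PowerSeries.X) ^ 3 := by
  have hmk : PowerSeries.mk (fun m =>
      ∏ k ∈ Finset.Icc 1 m, (x + (2 * Real.cos (2 * Real.pi * k / (2 * m + 1)) + 2) ^ 2))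
      = PowerSeries.mk (f x) := rfl
  rw [hmk]
  have h4 : PowerSeries.C (4 + x) = 4 + PowerSeries.C x := by
    rw [map_add, map_ofNat]
  have h6 : PowerSeries.C (6 - 2 * x) = 6 - 2 * PowerSeries.C x := by
    rw [map_sub, map_mul, map_ofNat, map_ofNat]
  have hfac : ((1 - PowerSeries.X) ^ 4 -
      PowerSeries.C x * PowerSeries.X * (1 + PowerSeries.X) ^ 2) * PowerSeries.mk (f x)
      = PowerSeries.mk (f x)
        - (4 + x) • (PowerSeries.mk (f x) * PowerSeries.X ^ 1)
        + (6 - 2 * x) • (PowerSeries.mk (f x) * PowerSeries.X ^ 2)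
        - (4 + x) • (PowerSeries.mk (f x) * PowerSeries.X ^ 3)
        + PowerSeries.mk (f x) * PowerSeries.X ^ 4 := by
    rw [PowerSeries.smul_eq_C_mul, PowerSeries.smul_eq_C_mul, PowerSeries.smul_eq_C_mul,
      h4, h6]
    ring
  have hrhs : (1 - PowerSeries.X : PowerSeries ℝ) ^ 3
      = 1 - (3 : ℝ) • (PowerSeries.X : PowerSeries ℝ) ^ 1
        + (3 : ℝ) • (PowerSeries.X : PowerSeries ℝ) ^ 2
        - (1 : ℝ) • (PowerSeries.X : PowerSeries ℝ) ^ 3 := by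
    rw [PowerSeries.smul_eq_C_mul, PowerSeries.smul_eq_C_mul, PowerSeries.smul_eq_C_mul,
      show PowerSeries.C (3 : ℝ) = (3 : PowerSeries ℝ) from map_ofNat _ 3, map_one]
    ring
  rw [hfac, hrhs]
  ext n
  simp only [map_add, map_sub, PowerSeries.coeff_smul, smul_eq_mul,
    PowerSeries.coeff_mul_X_pow', PowerSeries.coeff_mk, PowerSeries.coeff_one,
    PowerSeries.coeff_X_pow]
  by_cases hn : n ≤ 3
  · interval_cases n
    · norm_num [f_zero]
    · norm_num
      linarith [id1_all x, f_zero x]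
    · norm_num
      linarith [id2_all x, f_zero x]
    · norm_num
      linarith [id3_all x, f_zero x]
  · obtain ⟨m, rfl⟩ : ∃ m, n = m + 4 := ⟨n - 4, by omega⟩
    rw [if_pos (show (1:ℕ) ≤ m + 4 by omega), if_pos (show (2:ℕ) ≤ m + 4 by omega),
      if_pos (show (3:ℕ) ≤ m + 4 by omega), if_pos (show (4:ℕ) ≤ m + 4 by omega),
      if_neg (show ¬(m + 4 = 0) by omega), if_neg (show ¬(m + 4 = 1) by omega),
      if_neg (show ¬(m + 4 = 2) by omega), if_neg (show ¬(m + 4 = 3) by omega),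
      show m + 4 - 1 = m + 3 from by omega, show m + 4 - 2 = m + 2 from by omega,
      show m + 4 - 3 = m + 1 from by omega, show m + 4 - 4 = m from by omega]
    linarith [rec_all x m]
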